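/- Admissible pointed neighborhoods yield disjoint shrunken balls: let (A_i, x_i)_{i∈I} be a family of pointed sets in a metric space X such that for each k, B(x_k, r_k) ⊆ A_k ⊆ B(x_k, H·r_k) with H ≥ 1, and such that for each i ≠ j either x_i ∉ A_j or x_j ∉ A_i, and A_i ⊄ A_j and A_j ⊄ A_i. Then for all i ≠ j, B(x_i, r_i/(5H)) ∩ B(x_j, r_j/(5H)) = ∅. -/

import Mathlib

private lemma stmt_6_key {X : Type*} [MetricSpace X] {I : Type*}
    (x : I → X) (r : I → ℝ) (A : I → Set X) (H : ℝ) (hH : 1 ≤ H)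
    (hr : ∀ i, 0 < r i)
    (hlow : ∀ i, Metric.ball (x i) (r i) ⊆ A i)
    (hup : ∀ i, A i ⊆ Metric.ball (x i) (H * r i))
    (hadm2 : ∀ i j, i ≠ j → ¬ A i ⊆ A j)
    (i j : I) (hij : i ≠ j) (hx : x i ∉ A j) :
    r i / (5 * H) + r j / (5 * H) ≤ dist (x i) (x j) := by
  have hd1 : r j ≤ dist (x i) (x j) := by
    by_contra h
    push_neg at h
    exact hx (hlow j (by simpa [Metric.mem_ball, dist_comm] using h))
  obtain ⟨y, hyj, hyi⟩ := Set.not_subset.mp (hadm2 j i hij.symm)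
  have hy1 : r i ≤ dist (x i) y := by
    by_contra h
    push_neg at h
    exact hyi (hlow i (by simpa [Metric.mem_ball, dist_comm] using h))
  have hy2 : dist (x j) y < H * r j := by
    simpa [Metric.mem_ball, dist_comm] using hup j hyj
  have htri : dist (x i) y ≤ dist (x i) (x j) + dist (x j) y := dist_triangle _ _ _
  have hH0 : (0:ℝ) < 5 * H := by linarith
  rw [← add_div, div_le_iff₀ hH0]
  nlinarith [hr i, hr j, hd1, hy1, hy2, htri]

/-- Admissible pointed neighborhoods yield disjoint shrunken balls. -/
theorem stmt_6 {X : Type*} [MetricSpace X] {I : Type*}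
    (x : I → X) (r : I → ℝ) (A : I → Set X) (H : ℝ) (hH : 1 ≤ H)
    (hr : ∀ i, 0 < r i)
    (hlow : ∀ i, Metric.ball (x i) (r i) ⊆ A i)
    (hup : ∀ i, A i ⊆ Metric.ball (x i) (H * r i))
    (hadm1 : ∀ i j, i ≠ j → x i ∉ A j ∨ x j ∉ A i)
    (hadm2 : ∀ i j, i ≠ j → ¬ A i ⊆ A j) :
    ∀ i j, i ≠ j →
      Disjoint (Metric.ball (x i) (r i / (5 * H))) (Metric.ball (x j) (r j / (5 * H))) := by
  intro i j hij
  rcases hadm1 i j hij with hx | hx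
  · exact Metric.ball_disjoint_ball
      (stmt_6_key x r A H hH hr hlow hup hadm2 i j hij hx)
  · exact (Metric.ball_disjoint_ball
      (stmt_6_key x r A H hH hr hlow hup hadm2 j i hij.symm hx)).symm
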